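/- arXiv:2510.20501 — 6 statements merged into one kernel-verified Lean document; each statement's English description precedes it below -/
import Mathlib

section
/- Let (u_i)_{i≥0} be a sequence of nonnegative reals and q ∈ (1, ∞). If the series ∑_{k≥1} (1/k · ∑_{i≥k} u_i^q)^{1/q} converges, then ∑_{k≥1} u_k converges. -/
open scoped ENNReal NNReal

/-- If `(u_i)` is a sequence of nonnegative reals and `q ∈ (1,∞)`, and the series
`∑_{k≥1} (1/k · ∑_{i≥k} u_i^q)^{1/q}` converges, then `∑ u_k` converges. -/
theorem stmt0 (u : ℕ → ℝ≥0) (q : ℝ) (hq : 1 < q)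
    (h : ∑' k : ℕ, ((1 / ((k : ℝ≥0∞) + 1)) *
        ∑' i : ℕ, (u (k + 1 + i) : ℝ≥0∞) ^ q) ^ (1 / q) ≠ ∞) :
    Summable u := by
  set f : ℕ → ℝ≥0∞ := fun n => (u n : ℝ≥0∞) with hf
  set T : ℕ → ℝ≥0∞ := fun n => ∑' i, f (n + i) ^ q with hT
  set V : ℕ → ℝ≥0∞ := fun n => ((n : ℝ≥0∞)⁻¹ * T n) ^ (1 / q) with hV
  have hq0 : (0:ℝ) < q := lt_trans one_pos hq
  have hq0' : q ≠ 0 := ne_of_gt hq0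
  have hinvq : (0:ℝ) ≤ 1 / q := by positivity
  -- Step A : Jensen on a block
  have stepA : ∀ n : ℕ, 0 < n → ∑ i ∈ Finset.range n, f (n + i) ≤ (n : ℝ≥0∞) * V n := by
    intro n hn
    have hn0 : (n : ℝ≥0∞) ≠ 0 := by exact_mod_cast hn.ne'
    have hnt : (n : ℝ≥0∞) ≠ ∞ := ENNReal.natCast_ne_top n
    have hw : ∑ _i ∈ Finset.range n, (n : ℝ≥0∞)⁻¹ = 1 := by
      rw [Finset.sum_const, Finset.card_range, nsmul_eq_mul, ENNReal.mul_inv_cancel hn0 hnt]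
    have jensen := ENNReal.rpow_arith_mean_le_arith_mean_rpow (Finset.range n)
      (fun _ => (n : ℝ≥0∞)⁻¹) (fun i => f (n + i)) hw hq.le
    have h1 : ((n : ℝ≥0∞)⁻¹ * ∑ i ∈ Finset.range n, f (n + i)) ^ q ≤ (n : ℝ≥0∞)⁻¹ * T n := by
      calc ((n : ℝ≥0∞)⁻¹ * ∑ i ∈ Finset.range n, f (n + i)) ^ q
          = (∑ i ∈ Finset.range n, (n : ℝ≥0∞)⁻¹ * f (n + i)) ^ q := by
            rw [Finset.mul_sum]
        _ ≤ ∑ i ∈ Finset.range n, (n : ℝ≥0∞)⁻¹ * f (n + i) ^ q := jensen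
        _ = (n : ℝ≥0∞)⁻¹ * ∑ i ∈ Finset.range n, f (n + i) ^ q := by rw [Finset.mul_sum]
        _ ≤ (n : ℝ≥0∞)⁻¹ * T n := by
            gcongr
            exact ENNReal.sum_le_tsum _
    have h2 : (n : ℝ≥0∞)⁻¹ * ∑ i ∈ Finset.range n, f (n + i) ≤ V n := by
      have := ENNReal.rpow_le_rpow h1 hinvq
      rwa [← ENNReal.rpow_mul, mul_one_div_cancel hq0', ENNReal.rpow_one] at this
    calc ∑ i ∈ Finset.range n, f (n + i)
        = (n : ℝ≥0∞) * ((n : ℝ≥0∞)⁻¹ * ∑ i ∈ Finset.range n, f (n + i)) := by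
          rw [← mul_assoc, ENNReal.mul_inv_cancel hn0 hnt, one_mul]
      _ ≤ (n : ℝ≥0∞) * V n := by gcongr
  -- Step B : monotonicity of V
  have stepB : ∀ m n : ℕ, n ≤ m → V m ≤ V n := by
    intro m n hnm
    have hTmono : T m ≤ T n := by
      obtain ⟨d, rfl⟩ := le_iff_exists_add.mp hnm
      simp only [hT]
      have := ENNReal.tsum_comp_le_tsum_of_injective
        (f := fun i : ℕ => d + i) (add_right_injective d) (fun i => f (n + i) ^ q)
      simpa [Function.comp_def, add_assoc] using this
    apply ENNReal.rpow_le_rpow _ hinvq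
    gcongr
  -- the given series, rewritten
  set S : ℝ≥0∞ := ∑' k : ℕ, V (k + 1) with hS
  have hSh : S = ∑' k : ℕ, ((1 / ((k : ℝ≥0∞) + 1)) *
      ∑' i : ℕ, (u (k + 1 + i) : ℝ≥0∞) ^ q) ^ (1 / q) := by
    refine tsum_congr fun k => ?_
    simp only [hV, hT, hf, Nat.cast_add, Nat.cast_one, one_div]
  -- the main induction
  have hP : ∀ J : ℕ, ∑ n ∈ Finset.range (2 ^ (J + 1)), f n
      ≤ f 0 + f 1 + 2 * ∑ n ∈ Finset.Ico 1 (2 ^ J), V n := by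
    intro J
    induction J with
    | zero => simp [Finset.sum_range_succ]
    | succ J ih =>
      have hsplit : ∑ n ∈ Finset.range (2 ^ (J + 2)), f n
          = ∑ n ∈ Finset.range (2 ^ (J + 1)), f n
            + ∑ i ∈ Finset.range (2 ^ (J + 1)), f (2 ^ (J + 1) + i) := by
        rw [← Finset.sum_range_add]
        congr 1
        ring
      have hpos : 0 < 2 ^ (J + 1) := Nat.pow_pos (by norm_num)
      have hblock : ∑ i ∈ Finset.range (2 ^ (J + 1)), f (2 ^ (J + 1) + i)
          ≤ 2 * ∑ n ∈ Finset.Ico (2 ^ J) (2 ^ (J + 1)), V n := by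
        calc ∑ i ∈ Finset.range (2 ^ (J + 1)), f (2 ^ (J + 1) + i)
            ≤ ((2 ^ (J + 1) : ℕ) : ℝ≥0∞) * V (2 ^ (J + 1)) := stepA _ hpos
          _ = 2 * (((2 ^ J : ℕ) : ℝ≥0∞) * V (2 ^ (J + 1))) := by
              push_cast
              ring
          _ ≤ 2 * ∑ n ∈ Finset.Ico (2 ^ J) (2 ^ (J + 1)), V n := by
              gcongr
              have hcard : (Finset.Ico (2 ^ J) (2 ^ (J + 1))).card = 2 ^ J := by
                rw [Nat.card_Ico]
                omega
              calc ((2 ^ J : ℕ) : ℝ≥0∞) * V (2 ^ (J + 1))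
                  = (Finset.Ico (2 ^ J) (2 ^ (J + 1))).card • V (2 ^ (J + 1)) := by
                    rw [hcard, nsmul_eq_mul]
                _ ≤ ∑ n ∈ Finset.Ico (2 ^ J) (2 ^ (J + 1)), V n := by
                    apply Finset.card_nsmul_le_sum
                    intro n hn
                    exact stepB _ _ (Finset.mem_Ico.mp hn).2.le
      have hIco : ∑ n ∈ Finset.Ico 1 (2 ^ (J + 1)), V n
          = ∑ n ∈ Finset.Ico 1 (2 ^ J), V n + ∑ n ∈ Finset.Ico (2 ^ J) (2 ^ (J + 1)), V n := by
        rw [Finset.sum_Ico_consecutive]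
        · exact Nat.one_le_two_pow
        · exact Nat.pow_le_pow_right (by norm_num) (Nat.le_succ J)
      calc ∑ n ∈ Finset.range (2 ^ (J + 2)), f n
          = ∑ n ∈ Finset.range (2 ^ (J + 1)), f n
            + ∑ i ∈ Finset.range (2 ^ (J + 1)), f (2 ^ (J + 1) + i) := hsplit
        _ ≤ (f 0 + f 1 + 2 * ∑ n ∈ Finset.Ico 1 (2 ^ J), V n)
            + 2 * ∑ n ∈ Finset.Ico (2 ^ J) (2 ^ (J + 1)), V n := add_le_add ih hblock
        _ = f 0 + f 1 + 2 * ∑ n ∈ Finset.Ico 1 (2 ^ (J + 1)), V n := by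
            rw [hIco, mul_add, add_assoc]
  -- partial sums of V bounded by S
  have hVS : ∀ J : ℕ, ∑ n ∈ Finset.Ico 1 (2 ^ J), V n ≤ S := by
    intro J
    rw [Finset.sum_Ico_eq_sum_range]
    calc ∑ k ∈ Finset.range (2 ^ J - 1), V (1 + k)
        = ∑ k ∈ Finset.range (2 ^ J - 1), V (k + 1) := by
          refine Finset.sum_congr rfl fun k _ => by rw [add_comm]
      _ ≤ S := ENNReal.sum_le_tsum _
  -- conclude
  have hbound : ∑' n, f n ≤ f 0 + f 1 + 2 * S := by
    rw [ENNReal.tsum_eq_iSup_sum' (fun J => Finset.range (2 ^ (J + 1))) ?_]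
    · apply iSup_le
      intro J
      calc ∑ n ∈ Finset.range (2 ^ (J + 1)), f n
          ≤ f 0 + f 1 + 2 * ∑ n ∈ Finset.Ico 1 (2 ^ J), V n := hP J
        _ ≤ f 0 + f 1 + 2 * S := by gcongr; exact hVS J
    · intro t
      obtain ⟨n, hn⟩ := t.exists_nat_subset_range
      exact ⟨n, hn.trans (Finset.range_subset_range.mpr (le_trans (Nat.lt_two_pow_self (n := n)).le
        (Nat.pow_le_pow_right (by norm_num) (Nat.le_succ n))))⟩
  have hne : ∑' n, f n ≠ ∞ := by
    apply ne_top_of_le_ne_top _ hbound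
    have hS' : S ≠ ∞ := by rw [hSh]; exact h
    simp [ENNReal.add_ne_top, ENNReal.mul_ne_top, hS', hf]
  exact ENNReal.tsum_coe_ne_top_iff_summable.mp hne
end

section
/- Let (u_i)_{i≥0} be a nonincreasing sequence of nonnegative reals and q ∈ (1, ∞). Then ∑_{k≥1} (1/k · ∑_{i≥k} u_i^q)^{1/q} < ∞ if and only if ∑_{k≥1} u_k < ∞. -/
open scoped ENNReal NNReal


lemma aux_rpow_tsum_le (c : ℕ → ℝ≥0∞) {p : ℝ} (hp0 : 0 < p) (hp1 : p ≤ 1) :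
    (∑' j, c j) ^ p ≤ ∑' j, (c j) ^ p := by
  have key : ∀ s : Finset ℕ, (∑ j ∈ s, c j) ^ p ≤ ∑ j ∈ s, (c j) ^ p := by
    intro s
    induction s using Finset.cons_induction with
    | empty => simp [ENNReal.zero_rpow_of_pos hp0]
    | cons a s ha ih =>
      rw [Finset.sum_cons, Finset.sum_cons]
      exact (ENNReal.rpow_add_le_add_rpow _ _ hp0.le hp1).trans (add_le_add_right ih _)
  have h2 : (∑' j, c j) ≤ (∑' j, (c j) ^ p) ^ (1/p) := by
    rw [ENNReal.tsum_eq_iSup_sum]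
    refine iSup_le fun s => ?_
    rw [← ENNReal.rpow_le_rpow_iff hp0, ← ENNReal.rpow_mul, one_div,
      inv_mul_cancel₀ hp0.ne', ENNReal.rpow_one]
    exact (key s).trans (ENNReal.sum_le_tsum s)
  calc (∑' j, c j) ^ p ≤ ((∑' j, (c j) ^ p) ^ (1/p)) ^ p := ENNReal.rpow_le_rpow h2 hp0.le
    _ = ∑' j, (c j) ^ p := by
        rw [← ENNReal.rpow_mul, one_div, inv_mul_cancel₀ hp0.ne', ENNReal.rpow_one]

lemma aux_cond (c : ℕ → ℝ≥0∞) (hc : Antitone c) (m : ℕ) (hm : 1 ≤ m) :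
    (∑' i, c (m + i)) ≤ ∑' j : ℕ, ((m * 2 ^ j : ℕ) : ℝ≥0∞) * c (m * 2 ^ j) := by
  have blocks : ∀ N : ℕ, ∑ n ∈ Finset.Ico m (m * 2 ^ N), c n ≤
      ∑ j ∈ Finset.range N, ((m * 2 ^ j : ℕ) : ℝ≥0∞) * c (m * 2 ^ j) := by
    intro N
    induction N with
    | zero => simp
    | succ N ih =>
      have h1 : m ≤ m * 2 ^ N := Nat.le_mul_of_pos_right m (Nat.two_pow_pos _)
      have h2 : m * 2 ^ N ≤ m * 2 ^ (N + 1) := by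
        apply Nat.mul_le_mul_left
        exact Nat.pow_le_pow_right (by norm_num) (Nat.le_succ N)
      rw [← Finset.sum_Ico_consecutive _ h1 h2, Finset.sum_range_succ]
      refine add_le_add ih ?_
      have hcard : (Finset.Ico (m * 2 ^ N) (m * 2 ^ (N + 1))).card = m * 2 ^ N := by
        rw [Nat.card_Ico]; ring_nf; omega
      calc ∑ n ∈ Finset.Ico (m * 2 ^ N) (m * 2 ^ (N + 1)), c n
          ≤ (Finset.Ico (m * 2 ^ N) (m * 2 ^ (N + 1))).card • c (m * 2 ^ N) := by
            apply Finset.sum_le_card_nsmul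
            intro x hx
            exact hc (Finset.mem_Ico.1 hx).1
        _ = ((m * 2 ^ N : ℕ) : ℝ≥0∞) * c (m * 2 ^ N) := by rw [hcard, nsmul_eq_mul]
  rw [ENNReal.tsum_eq_iSup_nat]
  refine iSup_le fun N => ?_
  have e1 : ∑ i ∈ Finset.range N, c (m + i) = ∑ n ∈ Finset.Ico m (m + N), c n := by
    rw [Finset.sum_Ico_eq_sum_range]
    simp
  have e2 : m + N ≤ m * 2 ^ N := by
    have := Nat.lt_two_pow_self (n := N)
    nlinarith
  calc ∑ i ∈ Finset.range N, c (m + i) = ∑ n ∈ Finset.Ico m (m + N), c n := e1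
    _ ≤ ∑ n ∈ Finset.Ico m (m * 2 ^ N), c n :=
        Finset.sum_le_sum_of_subset (Finset.Ico_subset_Ico le_rfl e2)
    _ ≤ ∑ j ∈ Finset.range N, ((m * 2 ^ j : ℕ) : ℝ≥0∞) * c (m * 2 ^ j) := blocks N
    _ ≤ ∑' j : ℕ, ((m * 2 ^ j : ℕ) : ℝ≥0∞) * c (m * 2 ^ j) := ENNReal.sum_le_tsum _

set_option maxHeartbeats 1000000 in
/-- For a nonincreasing sequence `(u_i)` of nonnegative reals and `q ∈ (1,∞)`,
`∑_{k≥1} (1/k · ∑_{i≥k} u_i^q)^{1/q} < ∞` iff `∑_{k≥1} u_k < ∞`. -/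
theorem stmt1 (u : ℕ → ℝ≥0) (hu : Antitone u) (q : ℝ) (hq : 1 < q) :
    (∑' k : ℕ, ((1 / ((k : ℝ≥0∞) + 1)) *
        ∑' i : ℕ, (u (k + 1 + i) : ℝ≥0∞) ^ q) ^ (1 / q) ≠ ∞) ↔ Summable u := by
  have hq0 : (0:ℝ) < q := lt_trans one_pos hq
  have hiq0 : 0 < 1/q := by positivity
  have hiq1 : 1/q ≤ 1 := by rw [div_le_one hq0]; exact hq.le
  set a : ℕ → ℝ≥0∞ := fun n => (u n : ℝ≥0∞) with ha
  have haanti : Antitone a := fun m n h => ENNReal.coe_le_coe.2 (hu h)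
  set b : ℕ → ℝ≥0∞ := fun n => a n ^ q with hb
  have hbanti : Antitone b := fun m n h => ENNReal.rpow_le_rpow (haanti h) hq0.le
  have hba : ∀ n, (b n) ^ (1/q) = a n := by
    intro n
    rw [hb, ← ENNReal.rpow_mul, mul_one_div_cancel hq0.ne', ENNReal.rpow_one]
  set T : ℕ → ℝ≥0∞ := fun m => ∑' i, b (m + i) with hT
  set g : ℕ → ℝ≥0∞ := fun m => (((m:ℕ):ℝ≥0∞)⁻¹ * T m) ^ (1/q) with hg
  have hmne : ∀ m : ℕ, 1 ≤ m → ((m:ℕ):ℝ≥0∞) ≠ 0 ∧ ((m:ℕ):ℝ≥0∞) ≠ ∞ := by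
    intro m hm
    exact ⟨by exact_mod_cast Nat.cast_ne_zero.2 (by omega), ENNReal.natCast_ne_top m⟩
  have hsum_eq : (∑' k : ℕ, ((1 / ((k : ℝ≥0∞) + 1)) *
      ∑' i : ℕ, (u (k + 1 + i) : ℝ≥0∞) ^ q) ^ (1 / q)) = ∑' k, g (k+1) := by
    refine tsum_congr fun k => ?_
    have hcoef : (1 / ((k : ℝ≥0∞) + 1)) = (((k+1:ℕ)):ℝ≥0∞)⁻¹ := by
      push_cast
      rw [one_div]
    simp only [hg]
    rw [← hcoef]
  rw [hsum_eq]
  have ganti : ∀ m n : ℕ, 0 < m → m ≤ n → g n ≤ g m := by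
    intro m n hm hmn
    refine ENNReal.rpow_le_rpow (mul_le_mul' ?_ ?_) hiq0.le
    · exact ENNReal.inv_le_inv.2 (by exact_mod_cast hmn)
    · exact ENNReal.tsum_le_tsum fun i => hbanti (by omega)
  constructor
  · -- finite sum ⇒ summable
    intro H
    rw [← ENNReal.tsum_coe_ne_top_iff_summable]
    have key : ∀ k : ℕ, a (2*k+1) ≤ g (k+1) := by
      intro k
      obtain ⟨hc0, hctop⟩ := hmne (k+1) (by omega)
      have h1 : ((k+1:ℕ):ℝ≥0∞) * b (2*k+1) ≤ T (k+1) := by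
        calc ((k+1:ℕ):ℝ≥0∞) * b (2*k+1)
            = ∑ _i ∈ Finset.range (k+1), b (2*k+1) := by
              rw [Finset.sum_const, Finset.card_range, nsmul_eq_mul]
          _ ≤ ∑ i ∈ Finset.range (k+1), b ((k+1) + i) := by
              refine Finset.sum_le_sum fun i hi => hbanti ?_
              have := Finset.mem_range.1 hi; omega
          _ ≤ T (k+1) := ENNReal.sum_le_tsum _
      have h2 : b (2*k+1) ≤ ((k+1:ℕ):ℝ≥0∞)⁻¹ * T (k+1) := by
        rw [← one_mul (b (2*k+1)), ← ENNReal.inv_mul_cancel hc0 hctop, mul_assoc]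
        exact mul_le_mul_right h1 _
      calc a (2*k+1) = (b (2*k+1)) ^ (1/q) := (hba _).symm
        _ ≤ g (k+1) := ENNReal.rpow_le_rpow h2 hiq0.le
    have hodd : ∑' k, a (2*k+1) ≠ ∞ :=
      ne_top_of_le_ne_top H (ENNReal.tsum_le_tsum key)
    have hfin : ∀ M : ℕ, ∑ n ∈ Finset.range (2*M+1), a n ≤
        a 0 + 2 * ∑ k ∈ Finset.range M, a (2*k+1) := by
      intro M
      induction M with
      | zero => simp
      | succ M ih =>
        have e : 2*(M+1)+1 = (2*M+1) + 1 + 1 := by ring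
        rw [e, Finset.sum_range_succ, Finset.sum_range_succ,
          Finset.sum_range_succ (f := fun k => a (2*k+1)) (n := M)]
        have h1 : a (2*M+1+1) ≤ a (2*M+1) := haanti (by omega)
        calc (∑ n ∈ Finset.range (2*M+1), a n) + a (2*M+1) + a (2*M+1+1)
            ≤ (a 0 + 2 * ∑ k ∈ Finset.range M, a (2*k+1)) + a (2*M+1) + a (2*M+1) :=
              add_le_add (add_le_add ih le_rfl) h1
          _ = a 0 + 2 * ((∑ k ∈ Finset.range M, a (2*k+1)) + a (2*M+1)) := by ring
    have hbound : ∑' n, a n ≤ a 0 + 2 * ∑' k, a (2*k+1) := by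
      rw [ENNReal.tsum_eq_iSup_nat]
      refine iSup_le fun N => ?_
      calc ∑ n ∈ Finset.range N, a n ≤ ∑ n ∈ Finset.range (2*N+1), a n :=
            Finset.sum_le_sum_of_subset (Finset.range_subset_range.2 (by omega))
        _ ≤ a 0 + 2 * ∑ k ∈ Finset.range N, a (2*k+1) := hfin N
        _ ≤ a 0 + 2 * ∑' k, a (2*k+1) := by
            gcongr
            exact ENNReal.sum_le_tsum _
    refine ne_top_of_le_ne_top ?_ hbound
    exact ENNReal.add_ne_top.2 ⟨ENNReal.coe_ne_top, ENNReal.mul_ne_top (by norm_num) hodd⟩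
  · -- summable ⇒ finite
    intro hSum
    have hS : ∑' n, a n ≠ ∞ := ENNReal.tsum_coe_ne_top_iff_summable.2 hSum
    set t : ℝ≥0∞ := (2:ℝ≥0∞) ^ (1/q - 1) with hts
    have hexp : 1/q - 1 < 0 := by
      have : 1/q < 1 := (div_lt_one hq0).2 hq
      linarith
    have ht1 : t < 1 := by
      rw [hts]
      calc (2:ℝ≥0∞) ^ (1/q - 1) < 2 ^ (0:ℝ) :=
            ENNReal.rpow_lt_rpow_of_exponent_lt (by norm_num) (by norm_num) hexp
        _ = 1 := ENNReal.rpow_zero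
    have hpow2 : ∀ j : ℕ, ((2:ℝ≥0∞)^j) ^ (1/q) = t ^ j * (2:ℝ≥0∞) ^ j := by
      intro j
      calc ((2:ℝ≥0∞)^j) ^ (1/q) = (2:ℝ≥0∞) ^ ((j:ℝ) * (1/q)) := by
            rw [← ENNReal.rpow_natCast (2:ℝ≥0∞) j, ← ENNReal.rpow_mul]
        _ = (2:ℝ≥0∞) ^ ((1/q-1) * (j:ℝ) + (j:ℝ)) := by congr 1; ring
        _ = (2:ℝ≥0∞) ^ ((1/q-1) * (j:ℝ)) * (2:ℝ≥0∞) ^ ((j:ℝ)) :=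
            ENNReal.rpow_add _ _ (by norm_num) (by norm_num)
        _ = t ^ j * (2:ℝ≥0∞) ^ j := by
            rw [hts, ← ENNReal.rpow_natCast ((2:ℝ≥0∞) ^ (1/q-1) : ℝ≥0∞) j,
              ← ENNReal.rpow_mul, ← ENNReal.rpow_natCast (2:ℝ≥0∞) j]
    set d : ℕ → ℝ≥0∞ := fun n => (2:ℝ≥0∞)^n * a (2^n) with hd
    have hD : ∑' n, d n ≠ ∞ := by
      have := ENNReal.tsum_condensed_le (f := a) (fun m n hm hmn => haanti hmn)
      refine ne_top_of_le_ne_top ?_ this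
      exact ENNReal.add_ne_top.2 ⟨ENNReal.coe_ne_top, ENNReal.mul_ne_top (by norm_num) hS⟩
    have hC : ∑' j : ℕ, t ^ j ≠ ∞ := by
      rw [ENNReal.tsum_geometric]
      exact ENNReal.inv_ne_top.2 (tsub_pos_of_lt ht1).ne'
    -- g m ≤ ∑' j, t^j * d-like sum
    have hgm : ∀ m : ℕ, 1 ≤ m → g m ≤ ∑' j : ℕ, t ^ j * ((2:ℝ≥0∞)^j * a (m * 2^j)) := by
      intro m hm
      obtain ⟨hm0, hmtop⟩ := hmne m hm
      have h1 : ((m:ℕ):ℝ≥0∞)⁻¹ * T m ≤ ∑' j : ℕ, (2:ℝ≥0∞)^j * b (m * 2^j) := by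
        calc ((m:ℕ):ℝ≥0∞)⁻¹ * T m
            ≤ ((m:ℕ):ℝ≥0∞)⁻¹ * ∑' j : ℕ, ((m * 2^j : ℕ):ℝ≥0∞) * b (m * 2^j) :=
              mul_le_mul_right (aux_cond b hbanti m hm) _
          _ = ∑' j : ℕ, ((m:ℕ):ℝ≥0∞)⁻¹ * (((m * 2^j : ℕ):ℝ≥0∞) * b (m * 2^j)) := by
              rw [← ENNReal.tsum_mul_left]
          _ = ∑' j : ℕ, (2:ℝ≥0∞)^j * b (m * 2^j) := by
              refine tsum_congr fun j => ?_
              push_cast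
              rw [← mul_assoc, ← mul_assoc, ENNReal.inv_mul_cancel hm0 hmtop, one_mul]
      calc g m ≤ (∑' j : ℕ, (2:ℝ≥0∞)^j * b (m * 2^j)) ^ (1/q) :=
            ENNReal.rpow_le_rpow h1 hiq0.le
        _ ≤ ∑' j : ℕ, ((2:ℝ≥0∞)^j * b (m * 2^j)) ^ (1/q) := aux_rpow_tsum_le _ hiq0 hiq1
        _ = ∑' j : ℕ, t ^ j * ((2:ℝ≥0∞)^j * a (m * 2^j)) := by
            refine tsum_congr fun j => ?_
            rw [ENNReal.mul_rpow_of_nonneg _ _ hiq0.le, hba, hpow2 j, mul_assoc]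
    -- condensation on the outer sum
    have step1 : ∑' k, g (k+1) ≤ g 1 + ∑' l : ℕ, (2:ℝ≥0∞)^l * g (2^l) := by
      have := ENNReal.le_tsum_condensed (f := fun k => g (k+1))
        (fun m n hm hmn => ganti (m+1) (n+1) (by omega) (by omega))
      refine this.trans (add_le_add_right (ENNReal.tsum_le_tsum fun l => ?_) _)
      exact mul_le_mul_right (ganti (2^l) (2^l+1) (Nat.two_pow_pos _) (by omega)) _
    have hg1 : g 1 ≤ ∑' n, d n := by
      refine (hgm 1 le_rfl).trans (ENNReal.tsum_le_tsum fun j => ?_)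
      rw [hd, one_mul]
      calc t ^ j * ((2:ℝ≥0∞)^j * a (2^j)) ≤ 1 * ((2:ℝ≥0∞)^j * a (2^j)) :=
            mul_le_mul_left (pow_le_one' ht1.le j) _
        _ = (2:ℝ≥0∞)^j * a (2^j) := one_mul _
    have step2 : ∑' l : ℕ, (2:ℝ≥0∞)^l * g (2^l) ≤ (∑' j : ℕ, t ^ j) * ∑' n, d n := by
      calc ∑' l : ℕ, (2:ℝ≥0∞)^l * g (2^l)
          ≤ ∑' l : ℕ, (2:ℝ≥0∞)^l * ∑' j : ℕ, t ^ j * ((2:ℝ≥0∞)^j * a (2^l * 2^j)) :=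
            ENNReal.tsum_le_tsum fun l =>
              mul_le_mul_right (hgm (2^l) (Nat.one_le_two_pow)) _
        _ = ∑' l : ℕ, ∑' j : ℕ, t ^ j * d (l + j) := by
            refine tsum_congr fun l => ?_
            rw [← ENNReal.tsum_mul_left]
            refine tsum_congr fun j => ?_
            simp only [hd, pow_add]
            ring
        _ = ∑' j : ℕ, ∑' l : ℕ, t ^ j * d (l + j) := ENNReal.tsum_comm
        _ = ∑' j : ℕ, t ^ j * ∑' l : ℕ, d (l + j) := by
            refine tsum_congr fun j => ?_
            rw [ENNReal.tsum_mul_left]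
        _ ≤ ∑' j : ℕ, t ^ j * ∑' n, d n := by
            refine ENNReal.tsum_le_tsum fun j => mul_le_mul_right ?_ _
            exact ENNReal.tsum_comp_le_tsum_of_injective (add_left_injective j) d
        _ = (∑' j : ℕ, t ^ j) * ∑' n, d n := by rw [ENNReal.tsum_mul_right]
    have total : ∑' k, g (k+1) ≤ ∑' n, d n + (∑' j : ℕ, t ^ j) * ∑' n, d n :=
      step1.trans (add_le_add hg1 step2)
    exact ne_top_of_le_ne_top
      (ENNReal.add_ne_top.2 ⟨hD, ENNReal.mul_ne_top hC hD⟩) total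
end

section
/- Define a_i = 0 if i is not a power of 2, and a_{2^k} = 1/(2^{k/2} k^b) for k ≥ 1, where b ∈ (1/2, 1). Then ∑_{i≥0} a_i < ∞ and ∑_{i≥0} i·a_i² < ∞, but ∑_{k≥2} k^{-1/2} (∑_{i≥k} a_i²)^{1/2} = ∞. -/
open Real

lemma aux_not_summable_log :
    ¬ Summable (fun n : ℕ => 1 / ((n : ℝ) * (Real.log n + 1))) := by
  intro hs
  have h_nonneg : ∀ n : ℕ, 0 ≤ 1 / ((n : ℝ) * (Real.log n + 1)) := by
    intro n
    have h1 : (0:ℝ) ≤ Real.log n + 1 := by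
      have := Real.log_natCast_nonneg n; linarith
    positivity
  have h_anti : ∀ ⦃m n : ℕ⦄, 0 < m → m ≤ n →
      1 / ((n : ℝ) * (Real.log n + 1)) ≤ 1 / ((m : ℝ) * (Real.log m + 1)) := by
    intro m n hm hmn
    have hm1 : (1:ℝ) ≤ (m:ℝ) := by exact_mod_cast hm
    have hlm : (0:ℝ) ≤ Real.log m := Real.log_natCast_nonneg m
    have hpos : (0:ℝ) < (m:ℝ) * (Real.log m + 1) := by nlinarith
    apply one_div_le_one_div_of_le hpos
    have hcast : (m:ℝ) ≤ (n:ℝ) := by exact_mod_cast hmn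
    have hlog : Real.log m ≤ Real.log n := by
      apply Real.log_le_log (by linarith) hcast
    nlinarith
  have hcond := (summable_condensed_iff_of_nonneg h_nonneg h_anti).mpr hs
  -- condensed series : 2^n * (1 / (2^n * (log 2^n + 1))) = 1 / (n log 2 + 1)
  have hge : ∀ n : ℕ, 1 / ((n:ℝ) + 1) ≤
      2 ^ n * (1 / (((2^n : ℕ) : ℝ) * (Real.log ((2:ℝ)^n) + 1))) := by
    intro n
    have hpow : ((2^n : ℕ) : ℝ) = (2:ℝ)^n := by push_cast; ring
    rw [hpow, Real.log_pow]
    have hp : (0:ℝ) < (2:ℝ)^n := by positivity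
    have hlog2 : (0:ℝ) < Real.log 2 := Real.log_pos (by norm_num)
    have hlog2' : Real.log 2 ≤ 1 := by
      have := Real.log_le_sub_one_of_pos (x := 2) (by norm_num); linarith
    have hd : (0:ℝ) < (n:ℝ) * Real.log 2 + 1 := by positivity
    have heq2 : (2:ℝ)^n * (1 / ((2:ℝ)^n * ((n:ℝ) * Real.log 2 + 1))) =
        1 / ((n:ℝ) * Real.log 2 + 1) := by
      field_simp
    rw [heq2]
    apply one_div_le_one_div_of_le hd
    nlinarith [Nat.cast_nonneg (α := ℝ) n]
  have hsum1 : Summable (fun n : ℕ => 1 / ((n:ℝ) + 1)) := by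
    apply Summable.of_nonneg_of_le (fun n => by positivity) hge
    convert hcond using 2 with n
    push_cast
    ring_nf
  have : Summable (fun n : ℕ => 1 / ((n:ℝ))) := by
    rw [← summable_nat_add_iff 1]
    convert hsum1 using 2 with n
    case e'_3 => rfl
    push_cast
    ring
  exact Real.not_summable_one_div_natCast this

/-- With `a_i = 0` if `i` is not of the form `2^k` (`k ≥ 1`), and
`a_{2^k} = 1/(2^{k/2} k^b)` for `b ∈ (1/2,1)`, we have `∑ a_i < ∞` and
`∑ i a_i² < ∞`, but `∑_{k≥2} k^{-1/2} (∑_{i≥k} a_i²)^{1/2} = ∞`. -/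
theorem stmt3 (b : ℝ) (hb : 1 / 2 < b) (hb1 : b < 1) (a : ℕ → ℝ)
    (ha2 : ∀ k : ℕ, 1 ≤ k → a (2 ^ k) = 1 / ((2 : ℝ) ^ ((k : ℝ) / 2) * (k : ℝ) ^ b))
    (ha0 : ∀ i : ℕ, (∀ k : ℕ, 1 ≤ k → i ≠ 2 ^ k) → a i = 0) :
    Summable a ∧ Summable (fun i : ℕ => (i : ℝ) * a i ^ 2) ∧
      ¬ Summable (fun k : ℕ =>
        (1 / Real.sqrt ((k : ℝ) + 2)) * Real.sqrt (∑' i : ℕ, a (k + 2 + i) ^ 2)) := by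
  have hinj : Function.Injective (fun k : ℕ => 2 ^ k) := Nat.pow_right_injective le_rfl
  have hrange : ∀ x ∉ Set.range (fun k : ℕ => 2 ^ k), a x = 0 := by
    intro x hx
    apply ha0
    intro k hk hne
    exact hx ⟨k, hne.symm⟩
  -- basic bounds on values
  have hval_pos : ∀ k : ℕ, 1 ≤ k → 0 < (2 : ℝ) ^ ((k : ℝ) / 2) * (k : ℝ) ^ b := by
    intro k hk
    have hk1 : (1:ℝ) ≤ (k:ℝ) := by exact_mod_cast hk
    have h1 : (0:ℝ) < (2:ℝ) ^ ((k:ℝ)/2) := Real.rpow_pos_of_pos (by norm_num) _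
    have h2 : (0:ℝ) < (k:ℝ) ^ b := Real.rpow_pos_of_pos (by linarith) _
    exact mul_pos h1 h2
  have ha_nonneg : ∀ i : ℕ, 0 ≤ a i := by
    intro i
    by_cases h : ∃ k : ℕ, 1 ≤ k ∧ i = 2 ^ k
    · obtain ⟨k, hk, rfl⟩ := h
      rw [ha2 k hk]
      exact le_of_lt (by positivity)
    · rw [ha0 i (fun k hk hne => h ⟨k, hk, hne⟩)]
  have hval_le : ∀ k : ℕ, 1 ≤ k → a (2^k) ≤ ((2:ℝ) ^ ((k:ℝ)/2))⁻¹ := by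
    intro k hk
    rw [ha2 k hk, one_div]
    have hk1 : (1:ℝ) ≤ (k:ℝ) := by exact_mod_cast hk
    have hkb : (1:ℝ) ≤ (k:ℝ) ^ b := Real.one_le_rpow hk1 (by linarith)
    have h1 : (0:ℝ) < (2:ℝ) ^ ((k:ℝ)/2) := Real.rpow_pos_of_pos (by norm_num) _
    rw [mul_inv]
    have : ((k:ℝ) ^ b)⁻¹ ≤ 1 := by
      rw [inv_le_one_iff₀]; right; exact hkb
    nlinarith [inv_pos.mpr h1]
  have ha_le_one : ∀ i : ℕ, a i ≤ 1 := by
    intro i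
    by_cases h : ∃ k : ℕ, 1 ≤ k ∧ i = 2 ^ k
    · obtain ⟨k, hk, rfl⟩ := h
      refine (hval_le k hk).trans ?_
      rw [inv_le_one_iff₀]; right
      exact Real.one_le_rpow (by norm_num) (by positivity)
    · rw [ha0 i (fun k hk hne => h ⟨k, hk, hne⟩)]; norm_num
  -- Summability of a
  have hsa : Summable a := by
    rw [← hinj.summable_iff hrange]
    set r : ℝ := ((2:ℝ) ^ ((1:ℝ)/2))⁻¹ with hr
    have hr0 : 0 ≤ r := by positivity
    have hr1 : r < 1 := by
      rw [hr, inv_lt_one_iff₀]; right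
      exact Real.one_lt_rpow_iff_of_pos (by norm_num) |>.mpr (Or.inl ⟨by norm_num, by norm_num⟩)
    apply Summable.of_nonneg_of_le (fun k => ha_nonneg _) _ (summable_geometric_of_lt_one hr0 hr1)
    intro k
    rcases Nat.eq_zero_or_pos k with rfl | hk
    · simp only [Function.comp_apply, pow_zero]
      have : a 1 = 0 := ha0 1 (fun j hj hne => by
        have : (2:ℕ)^j ≥ 2 := by calc (2:ℕ)^j ≥ 2^1 := Nat.pow_le_pow_right (by norm_num) hj
                                     _ = 2 := by norm_num
        omega)
      rw [this]; positivity
    · have := hval_le k hk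
      refine this.trans (le_of_eq ?_)
      rw [hr, inv_pow, ← Real.rpow_natCast ((2:ℝ)^((1:ℝ)/2)) k,
        ← Real.rpow_mul (by norm_num : (0:ℝ) ≤ 2)]
      ring_nf
  -- Summability of i * a i ^ 2
  have hsa2 : Summable (fun i : ℕ => (i : ℝ) * a i ^ 2) := by
    rw [← hinj.summable_iff (f := fun i : ℕ => (i : ℝ) * a i ^ 2)
      (fun x hx => by show (x:ℝ) * a x ^ 2 = 0; rw [hrange x hx]; ring)]
    have h2b : 1 < 2 * b := by linarith
    apply Summable.of_nonneg_of_le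
      (fun k => mul_nonneg (by positivity) (sq_nonneg _))
      (f := fun k : ℕ => (((k:ℝ)) ^ (2*b))⁻¹) _ (Real.summable_nat_rpow_inv.mpr h2b)
    intro k
    rcases Nat.eq_zero_or_pos k with rfl | hk
    · simp only [Function.comp_apply, pow_zero]
      have h1 : a 1 = 0 := ha0 1 (fun j hj hne => by
        have : (2:ℕ)^j ≥ 2 := by calc (2:ℕ)^j ≥ 2^1 := Nat.pow_le_pow_right (by norm_num) hj
                                     _ = 2 := by norm_num
        omega)
      rw [h1]
      simp [Real.zero_rpow (show (2*b) ≠ 0 by nlinarith)]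
    · simp only [Function.comp_apply]
      rw [ha2 k hk]
      have hk1 : (1:ℝ) ≤ (k:ℝ) := by exact_mod_cast hk
      have h1 : (0:ℝ) < (2:ℝ) ^ ((k:ℝ)/2) := Real.rpow_pos_of_pos (by norm_num) _
      have h2 : (0:ℝ) < (k:ℝ) ^ b := Real.rpow_pos_of_pos (by linarith) _
      have hpow : ((2:ℝ) ^ ((k:ℝ)/2))^2 = (2:ℝ)^(k:ℕ) := by
        rw [← Real.rpow_natCast ((2:ℝ)^((k:ℝ)/2)) 2, ← Real.rpow_mul (by norm_num : (0:ℝ) ≤ 2),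
          ← Real.rpow_natCast 2 k]
        norm_num
      have hkb : ((k:ℝ) ^ b)^2 = (k:ℝ)^(2*b) := by
        rw [← Real.rpow_natCast ((k:ℝ)^b) 2, ← Real.rpow_mul (by linarith : (0:ℝ) ≤ (k:ℝ))]
        norm_num
        ring_nf
      have hkk : ((k:ℝ)) ^ (2*b) ≠ 0 := ne_of_gt (Real.rpow_pos_of_pos (by linarith) _)
      have hp2 : ((2:ℝ)) ^ (k:ℕ) ≠ 0 := by positivity
      rw [Nat.cast_pow, Nat.cast_ofNat, div_pow, one_pow, mul_pow, hpow, hkb]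
      rw [show (2:ℝ)^(k:ℕ) * (1/((2:ℝ)^(k:ℕ) * ((k:ℝ))^(2*b))) = (((k:ℝ))^(2*b))⁻¹ by
        field_simp]
  refine ⟨hsa, hsa2, ?_⟩
  -- the divergent series
  intro hdiv
  -- a^2 is summable
  have hsq : Summable (fun i : ℕ => a i ^ 2) := by
    apply Summable.of_nonneg_of_le (fun i => sq_nonneg _) _ hsa
    intro i
    have := ha_nonneg i
    have := ha_le_one i
    nlinarith
  -- lower bound: for each k, the term dominates c / ((k+2) * (log (k+2) + 1))
  have hlog2 : (0:ℝ) < Real.log 2 := Real.log_pos (by norm_num)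
  have hlog2half : (1:ℝ)/2 < Real.log 2 := by
    have := Real.log_two_gt_d9; linarith
  have key : ∀ k : ℕ,
      (1 / (2 * Real.sqrt 2)) * (1 / (((k:ℝ)+2) * (Real.log ((k:ℝ)+2) + 1)))
      ≤ (1 / Real.sqrt ((k : ℝ) + 2)) * Real.sqrt (∑' i : ℕ, a (k + 2 + i) ^ 2) := by
    intro k
    set n : ℕ := k + 2 with hn
    have hn2 : 2 ≤ n := by omega
    set m : ℕ := Nat.clog 2 n with hm
    have hm1 : 1 ≤ m := Nat.clog_pos (by norm_num) hn2
    have hnle : n ≤ 2 ^ m := Nat.le_pow_clog (by norm_num) n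
    have hlt : 2 ^ (m - 1) < n := by
      have := Nat.pow_pred_clog_lt_self (b := 2) (by norm_num) (x := n) (by omega)
      simpa [Nat.pred_eq_sub_one] using this
    have h2m : (2:ℕ) ^ m < 2 * n := by
      calc (2:ℕ)^m = 2 * 2^(m-1) := by
            rw [← pow_succ']
            congr 1
        _ < 2 * n := by omega
    -- the tail tsum is at least a(2^m)^2
    have htail : Summable (fun i : ℕ => a (n + i) ^ 2) := by
      have := (summable_nat_add_iff (f := fun i : ℕ => a i ^ 2) n).mpr hsq
      convert this using 2 with i
      case e'_3 => rfl
      ring_nf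
    have hterm : a (2 ^ m) ^ 2 ≤ ∑' i : ℕ, a (n + i) ^ 2 := by
      have heq : a (n + (2^m - n)) ^ 2 = a (2^m) ^ 2 := by
        have hx : n + (2^m - n) = 2^m := Nat.add_sub_cancel' hnle
        rw [hx]
      calc a (2^m)^2 = a (n + (2^m - n))^2 := heq.symm
        _ ≤ ∑' i : ℕ, a (n + i) ^ 2 := htail.le_tsum _ (fun j _ => sq_nonneg _)
    have hterm' : a (2 ^ m) ≤ Real.sqrt (∑' i : ℕ, a (n + i) ^ 2) := by
      have := Real.sqrt_le_sqrt hterm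
      rwa [Real.sqrt_sq (ha_nonneg _)] at this
    -- value of a (2^m)
    have hval := ha2 m hm1
    have hm1' : (1:ℝ) ≤ (m:ℝ) := by exact_mod_cast hm1
    -- a(2^m) ≥ 1/(sqrt(2n) * m)
    have hnn : (0:ℝ) < (n:ℝ) := by positivity
    have h2mn : ((2:ℝ)) ^ ((m:ℝ)/2) ≤ Real.sqrt (2 * n) := by
      have h2m' : ((2:ℝ)) ^ (m:ℕ) ≤ 2 * (n:ℝ) := by
        have : ((2:ℕ)^m : ℝ) ≤ 2 * (n:ℝ) := by exact_mod_cast h2m.le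
        simpa [Nat.cast_pow] using this
      have : ((2:ℝ)) ^ ((m:ℝ)/2) = Real.sqrt ((2:ℝ)^(m:ℕ)) := by
        rw [Real.sqrt_eq_rpow, ← Real.rpow_natCast 2 m, ← Real.rpow_mul (by norm_num : (0:ℝ) ≤ 2)]
        ring_nf
      rw [this]
      exact Real.sqrt_le_sqrt h2m'
    have hmb : ((m:ℝ)) ^ b ≤ (m:ℝ) := by
      calc ((m:ℝ))^b ≤ ((m:ℝ))^(1:ℝ) := Real.rpow_le_rpow_of_exponent_le hm1' hb1.le
        _ = (m:ℝ) := Real.rpow_one _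
    -- m ≤ 2 * (log n + 1)
    have hmlog : (m:ℝ) ≤ 2 * (Real.log n + 1) := by
      have hlogn : ((m:ℝ) - 1) * Real.log 2 ≤ Real.log n := by
        have hle : ((2:ℕ)^(m-1) : ℝ) ≤ (n:ℝ) := by exact_mod_cast hlt.le
        have : Real.log ((2:ℕ)^(m-1) : ℝ) ≤ Real.log n :=
          Real.log_le_log (by positivity) hle
        rw [Nat.cast_ofNat, Real.log_pow, Nat.cast_sub hm1] at this
        push_cast at this ⊢
        linarith
      nlinarith [Real.log_natCast_nonneg n]
    have hs2 : (0:ℝ) < Real.sqrt 2 := Real.sqrt_pos.mpr (by norm_num)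
    have hsn : (0:ℝ) < Real.sqrt ((k:ℝ)+2) := Real.sqrt_pos.mpr (by positivity)
    have hcastn : ((n:ℕ):ℝ) = (k:ℝ) + 2 := by push_cast [hn]; ring
    -- chain of bounds
    have hden : (2:ℝ) ^ ((m:ℝ)/2) * (m:ℝ)^b * Real.sqrt ((k:ℝ)+2)
        ≤ 2 * Real.sqrt 2 * (((k:ℝ)+2) * (Real.log ((k:ℝ)+2) + 1)) := by
      have h1 : (2:ℝ) ^ ((m:ℝ)/2) * (m:ℝ)^b * Real.sqrt ((k:ℝ)+2)
          ≤ Real.sqrt (2*n) * (2 * (Real.log n + 1)) * Real.sqrt ((k:ℝ)+2) := by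
        have hb0 : (0:ℝ) < ((m:ℝ))^b := Real.rpow_pos_of_pos (by linarith) _
        have h2p : (0:ℝ) < (2:ℝ)^((m:ℝ)/2) := Real.rpow_pos_of_pos (by norm_num) _
        have hmm : ((m:ℝ))^b ≤ 2 * (Real.log n + 1) := hmb.trans hmlog
        have hsqn : (0:ℝ) ≤ Real.sqrt (2*n) := Real.sqrt_nonneg _
        apply mul_le_mul_of_nonneg_right _ hsn.le
        exact mul_le_mul h2mn hmm hb0.le hsqn
      refine h1.trans (le_of_eq ?_)
      have hs2n : Real.sqrt (2 * n) = Real.sqrt 2 * Real.sqrt ((k:ℝ)+2) := by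
        rw [← Real.sqrt_mul (by norm_num : (0:ℝ) ≤ 2), hcastn]
      rw [hs2n, hcastn]
      have hsq2 : Real.sqrt ((k:ℝ)+2) * Real.sqrt ((k:ℝ)+2) = (k:ℝ)+2 :=
        Real.mul_self_sqrt (by positivity)
      linear_combination (2 * Real.sqrt 2 * (Real.log ((k:ℝ)+2) + 1)) * hsq2
    -- final
    have hrhs : 1 / ((2:ℝ) ^ ((m:ℝ)/2) * (m:ℝ)^b * Real.sqrt ((k:ℝ)+2))
        ≤ (1 / Real.sqrt ((k : ℝ) + 2)) * Real.sqrt (∑' i : ℕ, a (k + 2 + i) ^ 2) := by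
      have heqt : (fun i : ℕ => a (k + 2 + i) ^ 2) = (fun i : ℕ => a (n + i) ^ 2) := by
        funext i; rw [hn]
      rw [heqt]
      have h1A : 1 / ((2:ℝ)^((m:ℝ)/2) * (m:ℝ)^b) ≤ Real.sqrt (∑' i : ℕ, a (n + i) ^ 2) := by
        rw [← hval]; exact hterm'
      calc 1 / ((2:ℝ)^((m:ℝ)/2) * (m:ℝ)^b * Real.sqrt ((k:ℝ)+2))
          = (1 / Real.sqrt ((k:ℝ)+2)) * (1 / ((2:ℝ)^((m:ℝ)/2) * (m:ℝ)^b)) := by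
            rw [one_div, one_div, one_div, mul_inv]; ring
        _ ≤ (1 / Real.sqrt ((k:ℝ)+2)) * Real.sqrt (∑' i : ℕ, a (n + i) ^ 2) :=
            mul_le_mul_of_nonneg_left h1A (by positivity)
    refine le_trans ?_ hrhs
    rw [one_div, one_div, one_div]
    rw [mul_comm, ← mul_inv]
    apply inv_anti₀
    · positivity
    · calc (2:ℝ)^((m:ℝ)/2) * (m:ℝ)^b * Real.sqrt ((k:ℝ)+2)
          ≤ 2 * Real.sqrt 2 * (((k:ℝ)+2) * (Real.log ((k:ℝ)+2) + 1)) := hden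
        _ = ((k:ℝ)+2) * (Real.log ((k:ℝ)+2) + 1) * (2 * Real.sqrt 2) := by ring
  -- derive contradiction
  have hbase : Summable (fun k : ℕ =>
      (1 / (2 * Real.sqrt 2)) * (1 / (((k:ℝ)+2) * (Real.log ((k:ℝ)+2) + 1)))) := by
    apply Summable.of_nonneg_of_le _ key hdiv
    intro k
    have h1 : (0:ℝ) ≤ Real.log ((k:ℝ)+2) := Real.log_nonneg (by push_cast; linarith [Nat.cast_nonneg (α := ℝ) k])
    positivity
  have hs2 : (0:ℝ) < Real.sqrt 2 := Real.sqrt_pos.mpr (by norm_num)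
  have hbase2 : Summable (fun k : ℕ => 1 / (((k:ℝ)+2) * (Real.log ((k:ℝ)+2) + 1))) := by
    have h := hbase.mul_left (2 * Real.sqrt 2)
    refine h.congr fun k => ?_
    field_simp
  have hbase3 : Summable (fun n : ℕ => 1 / ((n:ℝ) * (Real.log n + 1))) := by
    rw [← summable_nat_add_iff 2]
    convert hbase2 using 2 with k
    case e'_3 => rfl
    push_cast
    ring_nf
  exact aux_not_summable_log hbase3
end

section
/- If (u_k)_{k≥1} is a sequence of nonnegative reals such that the sequence k ↦ u_k/√k is nonincreasing and ∑_{k≥1} u_k/√k < ∞, then ∑_{k≥1} u_k² < ∞. -/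
/-- If `(u_k)_{k≥1}` is nonnegative, `k ↦ u_k/√k` is nonincreasing and
`∑ u_k/√k < ∞`, then `∑ u_k² < ∞`. -/
theorem stmt5 (u : ℕ → ℝ) (hnn : ∀ k, 0 ≤ u k)
    (hmono : ∀ j k : ℕ, 1 ≤ j → j ≤ k →
      u k / Real.sqrt k ≤ u j / Real.sqrt j)
    (hsum : Summable (fun k : ℕ => u (k + 1) / Real.sqrt ((k : ℝ) + 1))) :
    Summable (fun k : ℕ => u (k + 1) ^ 2) := by
  set v : ℕ → ℝ := fun k => u (k + 1) / Real.sqrt ((k : ℝ) + 1) with hv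
  have hvnn : ∀ k, 0 ≤ v k := fun k =>
    div_nonneg (hnn _) (Real.sqrt_nonneg _)
  have hvmono : ∀ j k : ℕ, j ≤ k → v k ≤ v j := by
    intro j k hjk
    have := hmono (j + 1) (k + 1) (Nat.le_add_left 1 j) (by omega)
    simpa [hv, Nat.cast_add, Nat.cast_one] using this
  set C : ℝ := ∑' k, v k with hC
  have hkey : ∀ k : ℕ, ((k : ℝ) + 1) * v k ≤ C := by
    intro k
    have h1 : ((k : ℝ) + 1) * v k = ∑ j ∈ Finset.range (k + 1), v k := by
      simp [Finset.sum_const, mul_comm]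
    have h2 : ∑ j ∈ Finset.range (k + 1), v k ≤ ∑ j ∈ Finset.range (k + 1), v j :=
      Finset.sum_le_sum fun j hj => hvmono j k (by
        simpa [Nat.lt_succ_iff] using Finset.mem_range.mp hj)
    have h3 : ∑ j ∈ Finset.range (k + 1), v j ≤ C :=
      Summable.sum_le_tsum _ (fun j _ => hvnn j) hsum
    linarith
  have hCv : Summable (fun k => C * v k) := hsum.mul_left C
  refine Summable.of_nonneg_of_le (fun k => sq_nonneg _) (fun k => ?_) hCv
  have hsq : u (k + 1) ^ 2 = ((k : ℝ) + 1) * v k * v k := by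
    have hk : (0:ℝ) < (k : ℝ) + 1 := by positivity
    have hs : Real.sqrt ((k : ℝ) + 1) ^ 2 = (k : ℝ) + 1 :=
      Real.sq_sqrt hk.le
    field_simp [hv]
    simp only [hv, div_pow, hs]
    field_simp
  rw [hsq]
  exact mul_le_mul_of_nonneg_right (hkey k) (hvnn k)
end

section
/- Let (X_i)_{i≥1} be random variables in L²(P) adapted in the sense that each E(X_i | F_0) is defined for a sub-σ-algebra F_0, and suppose ∑_{k≥1} ‖E(X_k | F_0)‖₂² < ∞. Then n^{-1} ‖max_{1≤k≤n} |E(S_k | F_0)|‖₂² → 0 as n → ∞, where S_k = X_1 + ⋯ + X_n up to k. -/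
open MeasureTheory Filter

private lemma tail_aux (b : ℕ → ℝ) (hb : ∀ k, 0 ≤ b k)
    (hsum : Summable fun k => (b k) ^ 2) :
    Tendsto (fun n : ℕ => (1 / (n : ℝ)) * (∑ k ∈ Finset.range n, b k) ^ 2) atTop (nhds 0) := by
  rw [Metric.tendsto_nhds]
  intro ε hε
  have htail : Tendsto (fun m => ∑' k, (b (k + m)) ^ 2) atTop (nhds 0) :=
    tendsto_sum_nat_add fun k => (b k) ^ 2
  obtain ⟨m, hm⟩ := (htail.eventually (gt_mem_nhds (by linarith : (0:ℝ) < ε / 4))).exists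
  set T := ∑' k, (b (k + m)) ^ 2 with hT
  have hsm : Summable fun k => (b (k + m)) ^ 2 :=
    (summable_nat_add_iff m).2 hsum
  have hTnn : 0 ≤ T := tsum_nonneg fun k => sq_nonneg _
  set C := ∑ k ∈ Finset.range m, b k with hC
  have hCnn : 0 ≤ C := Finset.sum_nonneg fun i _ => hb i
  have hNev : ∀ᶠ n : ℕ in atTop, 2 * C ^ 2 / (n : ℝ) < ε / 2 :=
    (tendsto_const_div_atTop_nhds_zero_nat (2 * C ^ 2)).eventually
      (gt_mem_nhds (by linarith : (0:ℝ) < ε / 2))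
  filter_upwards [hNev, eventually_ge_atTop (m + 1)] with n h1n hn
  have hmn : m ≤ n := le_trans (Nat.le_succ m) hn
  have hn1 : (1 : ℝ) ≤ (n : ℝ) := by exact_mod_cast Nat.one_le_iff_ne_zero.2 (by omega)
  have ht : (0 : ℝ) < (n : ℝ) := lt_of_lt_of_le one_pos hn1
  set D := ∑ k ∈ Finset.Ico m n, b k with hD
  have hDnn : 0 ≤ D := Finset.sum_nonneg fun i _ => hb i
  have hsplit : ∑ k ∈ Finset.range n, b k = C + D := by
    rw [hC, hD, Finset.range_eq_Ico, Finset.range_eq_Ico]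
    exact (Finset.sum_Ico_consecutive b (Nat.zero_le m) hmn).symm
  have hCS : D ^ 2 ≤ (∑ k ∈ Finset.Ico m n, (b k) ^ 2) * (n : ℝ) := by
    have h := Finset.sum_mul_sq_le_sq_mul_sq (Finset.Ico m n) b (fun _ => (1 : ℝ))
    simp only [mul_one, one_pow, Finset.sum_const, nsmul_eq_mul] at h
    have hcard : ((Finset.Ico m n).card : ℝ) ≤ (n : ℝ) := by
      rw [Nat.card_Ico]; exact_mod_cast Nat.sub_le n m
    calc D ^ 2 ≤ (∑ k ∈ Finset.Ico m n, (b k) ^ 2) * ((Finset.Ico m n).card : ℝ) := h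
      _ ≤ (∑ k ∈ Finset.Ico m n, (b k) ^ 2) * (n : ℝ) := by
          exact mul_le_mul_of_nonneg_left hcard (Finset.sum_nonneg fun i _ => sq_nonneg _)
  have htailsum : ∑ k ∈ Finset.Ico m n, (b k) ^ 2 ≤ T := by
    rw [Finset.sum_Ico_eq_sum_range]
    have : ∀ k ∈ Finset.range (n - m), (b (m + k)) ^ 2 = (b (k + m)) ^ 2 := by
      intro k _; rw [add_comm]
    rw [Finset.sum_congr rfl this]
    exact Summable.sum_le_tsum _ (fun i _ => sq_nonneg _) hsm
  have hD2 : D ^ 2 ≤ T * (n : ℝ) :=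
    hCS.trans (mul_le_mul_of_nonneg_right htailsum (le_of_lt ht))
  have hkey : (C + D) ^ 2 ≤ 2 * C ^ 2 + 2 * (T * (n : ℝ)) := by
    nlinarith [sq_nonneg (C - D)]
  have hfin : (1 / (n : ℝ)) * (∑ k ∈ Finset.range n, b k) ^ 2 ≤ 2 * C ^ 2 / (n : ℝ) + 2 * T := by
    rw [hsplit]
    calc (1 / (n : ℝ)) * (C + D) ^ 2 ≤ (1 / (n : ℝ)) * (2 * C ^ 2 + 2 * (T * (n : ℝ))) :=
          mul_le_mul_of_nonneg_left hkey (by positivity)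
      _ = 2 * C ^ 2 / (n : ℝ) + 2 * T := by field_simp
  have hnn : 0 ≤ (1 / (n : ℝ)) * (∑ k ∈ Finset.range n, b k) ^ 2 := by positivity
  rw [Real.dist_eq, sub_zero, abs_of_nonneg hnn]
  have : T < ε / 4 := hm
  linarith

private lemma condexp_memL2 {Ω : Type*} [m0 : MeasurableSpace Ω] (μ : Measure Ω)
    [IsProbabilityMeasure μ] (F0 : MeasurableSpace Ω) (hF0 : F0 ≤ m0) {f : Ω → ℝ}
    (hf : MemLp f 2 μ) : MemLp (condExp F0 μ f) 2 μ := by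
  letI := m0
  haveI : SigmaFinite (μ.trim hF0) := inferInstance
  have hgmem : MemLp (((condExpL2 ℝ ℝ hF0 (hf.toLp f)) : Lp ℝ 2 μ) : Ω → ℝ) 2 μ := Lp.memLp _
  refine hgmem.ae_eq ?_
  refine ae_eq_condExp_of_forall_setIntegral_eq hF0 (hf.integrable one_le_two)
    (fun s hs hμs => ?_) (fun s hs hμs => ?_) ?_
  · exact (hgmem.integrable one_le_two).integrableOn
  · rw [integral_condExpL2_eq hF0 (hf.toLp f) hs hμs.ne]
    exact integral_congr_ae (ae_restrict_of_ae hf.coeFn_toLp)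
  · exact aestronglyMeasurable_condExpL2 hF0 _

/-- If `∑_k ‖E(X_k|F₀)‖₂² < ∞`, then `n⁻¹ ‖max_{1≤k≤n} |E(S_k|F₀)|‖₂² → 0`,
where `S_k = X_1 + ⋯ + X_k`. -/
theorem stmt7 {Ω : Type*} [m0 : MeasurableSpace Ω] (μ : Measure Ω) [IsProbabilityMeasure μ]
    (F0 : MeasurableSpace Ω) (hF0 : F0 ≤ m0) (X : ℕ → Ω → ℝ)
    (hX : ∀ i, MemLp (X i) 2 μ)
    (hsum : Summable (fun k : ℕ => ((eLpNorm (condExp F0 μ (X (k + 1))) 2 μ).toReal) ^ 2)) :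
    Tendsto (fun n : ℕ => (1 / (n : ℝ)) *
      ((eLpNorm (fun ω => ⨆ k : Finset.Icc 1 n,
        |condExp F0 μ (fun ω' => ∑ i ∈ Finset.Icc 1 (k : ℕ), X i ω') ω|) 2 μ).toReal) ^ 2)
      atTop (nhds 0) := by
  letI := m0
  haveI : SigmaFinite (μ.trim hF0) := inferInstance
  have hXint : ∀ i, Integrable (X i) μ := fun i => (hX i).integrable one_le_two
  have hYmem : ∀ i, MemLp (condExp F0 μ (X i)) 2 μ :=
    fun i => condexp_memL2 μ F0 hF0 (hX i)
  set a : ℕ → ℝ := fun i => (eLpNorm (condExp F0 μ (X i)) 2 μ).toReal with ha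
  have hann : ∀ i, 0 ≤ a i := fun i => ENNReal.toReal_nonneg
  -- a.e. identification of condexp of partial sums
  have hae : ∀ᵐ ω ∂μ, ∀ k : ℕ,
      condExp F0 μ (fun ω' => ∑ i ∈ Finset.Icc 1 k, X i ω') ω
        = ∑ i ∈ Finset.Icc 1 k, condExp F0 μ (X i) ω := by
    rw [ae_all_iff]
    intro k
    have h1 : (fun ω' => ∑ i ∈ Finset.Icc 1 k, X i ω') = ∑ i ∈ Finset.Icc 1 k, X i := by
      funext ω'; simp [Finset.sum_apply]
    rw [h1]
    filter_upwards [condExp_finsetSum (fun i _ => hXint i) (m := F0)] with ω hω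
    rw [hω]; simp [Finset.sum_apply]
  -- key norm bound
  have key : ∀ n : ℕ,
      (eLpNorm (fun ω => ⨆ k : Finset.Icc 1 n,
        |condExp F0 μ (fun ω' => ∑ i ∈ Finset.Icc 1 (k : ℕ), X i ω') ω|) 2 μ).toReal
        ≤ ∑ i ∈ Finset.Icc 1 n, a i := by
    intro n
    set g : Ω → ℝ := fun ω => ∑ i ∈ Finset.Icc 1 n, |condExp F0 μ (X i) ω| with hgdef
    have step1 : eLpNorm (fun ω => ⨆ k : Finset.Icc 1 n,
        |condExp F0 μ (fun ω' => ∑ i ∈ Finset.Icc 1 (k : ℕ), X i ω') ω|) 2 μ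
        ≤ eLpNorm g 2 μ := by
      refine eLpNorm_mono_ae ?_
      filter_upwards [hae] with ω hω
      have hgnn : 0 ≤ g ω := Finset.sum_nonneg fun i _ => abs_nonneg _
      have hsupnn : 0 ≤ ⨆ k : Finset.Icc 1 n,
          |condExp F0 μ (fun ω' => ∑ i ∈ Finset.Icc 1 (k : ℕ), X i ω') ω| :=
        Real.iSup_nonneg fun k => abs_nonneg _
      rw [Real.norm_eq_abs, Real.norm_eq_abs, abs_of_nonneg hgnn, abs_of_nonneg hsupnn]
      refine Real.iSup_le (fun k => ?_) hgnn
      rw [hω (k : ℕ)]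
      calc |∑ i ∈ Finset.Icc 1 (k : ℕ), condExp F0 μ (X i) ω|
          ≤ ∑ i ∈ Finset.Icc 1 (k : ℕ), |condExp F0 μ (X i) ω| :=
            Finset.abs_sum_le_sum_abs _ _
        _ ≤ g ω := by
            refine Finset.sum_le_sum_of_subset_of_nonneg ?_ (fun i _ _ => abs_nonneg _)
            exact Finset.Icc_subset_Icc_right (Finset.mem_Icc.1 k.2).2
    have hmeas : ∀ i : ℕ, AEStronglyMeasurable (fun ω => |condExp F0 μ (X i) ω|) μ := by
      intro i
      have h0 : AEStronglyMeasurable (condExp F0 μ (X i)) μ :=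
        (stronglyMeasurable_condExp.mono hF0).aestronglyMeasurable
      simpa [Real.norm_eq_abs] using h0.norm
    have step2 : eLpNorm g 2 μ ≤ ∑ i ∈ Finset.Icc 1 n, eLpNorm (condExp F0 μ (X i)) 2 μ := by
      have hgeq : g = ∑ i ∈ Finset.Icc 1 n, (fun ω => |condExp F0 μ (X i) ω|) := by
        funext ω; simp [hgdef, Finset.sum_apply]
      rw [hgeq]
      refine le_trans (eLpNorm_sum_le (fun i _ => hmeas i) one_le_two) ?_
      refine Finset.sum_le_sum fun i _ => le_of_eq ?_
      refine eLpNorm_congr_norm_ae ?_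
      filter_upwards with ω
      simp [Real.norm_eq_abs, abs_abs]
    have hfin : ∀ i ∈ Finset.Icc 1 n, eLpNorm (condExp F0 μ (X i)) 2 μ ≠ ⊤ :=
      fun i _ => (hYmem i).2.ne
    have h3 := ENNReal.toReal_mono
      (by
        rw [← lt_top_iff_ne_top]
        exact ENNReal.sum_lt_top.2 fun i hi => lt_top_iff_ne_top.2 (hfin i hi))
      (le_trans step1 step2)
    rwa [ENNReal.toReal_sum hfin] at h3
  -- reduce to real lemma
  have hsum' : Summable fun k => (a (k + 1)) ^ 2 := hsum
  have hb := tail_aux (fun k => a (k + 1)) (fun k => hann _) hsum'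
  have hicc : ∀ n : ℕ, ∑ i ∈ Finset.Icc 1 n, a i = ∑ k ∈ Finset.range n, a (k + 1) := by
    intro n
    rw [← Finset.Ico_add_one_right_eq_Icc, Finset.sum_Ico_eq_sum_range]
    simp [add_comm]
  refine squeeze_zero (fun n => by positivity) (fun n => ?_) hb
  have h1 : (eLpNorm (fun ω => ⨆ k : Finset.Icc 1 n,
      |condExp F0 μ (fun ω' => ∑ i ∈ Finset.Icc 1 (k : ℕ), X i ω') ω|) 2 μ).toReal ^ 2
      ≤ (∑ k ∈ Finset.range n, a (k + 1)) ^ 2 := by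
    rw [← hicc n]
    exact pow_le_pow_left₀ ENNReal.toReal_nonneg (key n) 2
  exact mul_le_mul_of_nonneg_left h1 (by positivity)
end

section
/- Let (X_i)_{i≥1} be random variables in L²(P) with ∑_{k≥1} ‖E(X_k | F_0)‖₂² < ∞. Then n^{-1} max_{1≤k≤n} (E(S_k | F_0))² → 0 almost surely as n → ∞. -/
open MeasureTheory Filter

private lemma sq_eLpNorm_two {Ω : Type*} [MeasurableSpace Ω] {μ : Measure Ω} {f : Ω → ℝ}
    (hf : MemLp f 2 μ) : ((eLpNorm f 2 μ).toReal) ^ 2 = ∫ ω, f ω ^ 2 ∂μ := by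
  rw [hf.eLpNorm_eq_integral_rpow_norm two_ne_zero ENNReal.ofNat_ne_top,
    ENNReal.toReal_ofReal (by positivity), ENNReal.toReal_ofNat]
  have hnn : 0 ≤ ∫ a, ‖f a‖ ^ (2:ℝ) ∂μ := integral_nonneg fun a => by positivity
  rw [← Real.rpow_natCast (_ ^ (2:ℝ)⁻¹) 2, ← Real.rpow_mul hnn]
  norm_num

private lemma memLp2_condexp {Ω : Type*} [m0 : MeasurableSpace Ω] (μ : Measure Ω)
    [IsProbabilityMeasure μ] (F0 : MeasurableSpace Ω) (hF0 : F0 ≤ m0) {f : Ω → ℝ}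
    (hf : MemLp f 2 μ) : MemLp (μ[f|F0]) 2 μ := by
  have hgmem : MemLp (condExpL2 ℝ ℝ hF0 (hf.toLp f) : Ω → ℝ) 2 μ := Lp.memLp _
  refine hgmem.ae_eq ?_
  refine ae_eq_condExp_of_forall_setIntegral_eq hF0 (hf.integrable one_le_two) ?_ ?_ ?_
  · intro s hs hμs
    exact integrableOn_condExpL2_of_measure_ne_top (𝕜 := ℝ) hF0 hμs.ne _
  · intro s hs hμs
    letI : MeasurableSpace Ω := m0
    rw [integral_condExpL2_eq (𝕜 := ℝ) hF0 (hf.toLp f) hs hμs.ne]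
    exact setIntegral_congr_ae (hF0 s hs) (hf.coeFn_toLp.mono fun x hx _ => hx)
  · exact aestronglyMeasurable_condExpL2 hF0 _

private lemma det_tendsto (y : ℕ → ℝ) (hy : Summable fun k => y (k + 1) ^ 2) :
    Tendsto (fun n : ℕ => (1 / (n : ℝ)) *
      ⨆ k : Finset.Icc 1 n, (∑ i ∈ Finset.Icc 1 (k : ℕ), y i) ^ 2) atTop (nhds 0) := by
  have hg : Summable fun i => y i ^ 2 := (summable_nat_add_iff 1).mp hy
  set T : ℕ → ℝ := fun k => ∑ i ∈ Finset.Ioc 0 k, y i with hTdef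
  have hTeq : ∀ k : ℕ, ∑ i ∈ Finset.Icc 1 k, y i = T k := by
    intro k
    apply Finset.sum_congr _ fun _ _ => rfl
    ext i; simp; omega
  simp only [hTeq]
  set s : ℕ → ℝ := fun n => ∑ i ∈ Finset.range n, y i ^ 2 with hsdef
  have hcauchy : CauchySeq s := hg.hasSum.tendsto_sum_nat.cauchySeq
  rw [Metric.tendsto_atTop]
  intro ε hε
  obtain ⟨M, hM⟩ := Metric.cauchySeq_iff'.mp hcauchy (ε / 8) (by linarith)
  set m := M with hmdef
  -- tail bound
  have htail : ∀ k : ℕ, ∑ i ∈ Finset.Ioc m k, y i ^ 2 ≤ ε / 4 := by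
    intro k
    rcases le_or_gt k m with hk | hk
    · rw [Finset.Ioc_eq_empty (by omega)]
      simp; linarith
    · have hIoc : Finset.Ioc m k = Finset.Ico (m + 1) (k + 1) := by
        ext i; simp
      have h1 : ∑ i ∈ Finset.Ioc m k, y i ^ 2 = s (k + 1) - s (m + 1) := by
        rw [hIoc, Finset.sum_Ico_eq_sub _ (by omega)]
      have h2 := hM (k + 1) (by omega)
      have h3 := hM (m + 1) (by omega)
      rw [Real.dist_eq] at h2 h3
      have h4 : |s (k + 1) - s (m + 1)| ≤ |s (k + 1) - s m| + |s (m + 1) - s m| := by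
        have := abs_sub_le (s (k + 1)) (s m) (s (m + 1))
        calc |s (k + 1) - s (m + 1)| ≤ |s (k + 1) - s m| + |s m - s (m + 1)| := this
          _ = |s (k + 1) - s m| + |s (m + 1) - s m| := by rw [abs_sub_comm (s m)]
      have h45 : |s (k + 1) - s (m + 1)| < ε / 4 := lt_of_le_of_lt h4 (by linarith)
      rw [h1]
      linarith [(abs_le.mp h45.le).2]
  set C : ℝ := ∑ j ∈ Finset.range (m + 1), T j ^ 2 with hCdef
  have hC0 : 0 ≤ C := Finset.sum_nonneg fun j _ => sq_nonneg _
  have hCle : ∀ k ≤ m, T k ^ 2 ≤ C := fun k hk =>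
    Finset.single_le_sum (fun j _ => sq_nonneg (T j)) (Finset.mem_range.mpr (by omega))
  have hkey : ∀ n : ℕ, ∀ k ≤ n, T k ^ 2 ≤ 2 * C + (n : ℝ) * (ε / 2) := by
    intro n k hkn
    have hn0 : (0:ℝ) ≤ (n : ℝ) * (ε / 2) := by positivity
    rcases le_or_gt k m with hk | hk
    · linarith [hCle k hk]
    · have hsplit : T k = T m + ∑ i ∈ Finset.Ioc m k, y i :=
        (Finset.sum_Ioc_consecutive _ (Nat.zero_le m) hk.le).symm
      have hcs : (∑ i ∈ Finset.Ioc m k, y i) ^ 2 ≤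
          ((Finset.Ioc m k).card : ℝ) * ∑ i ∈ Finset.Ioc m k, y i ^ 2 := by
        exact_mod_cast sq_sum_le_card_mul_sum_sq (s := Finset.Ioc m k) (f := y)
      have hcard : ((Finset.Ioc m k).card : ℝ) ≤ (n : ℝ) := by
        rw [Nat.card_Ioc]
        exact_mod_cast (by omega : k - m ≤ n)
      have hsq_nn : (0:ℝ) ≤ ∑ i ∈ Finset.Ioc m k, y i ^ 2 :=
        Finset.sum_nonneg fun i _ => sq_nonneg _
      have h5 : (∑ i ∈ Finset.Ioc m k, y i) ^ 2 ≤ (n : ℝ) * (ε / 4) :=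
        le_trans hcs (mul_le_mul hcard (htail k) hsq_nn (by positivity))
      have hTm : T m ^ 2 ≤ C := hCle m le_rfl
      rw [hsplit]
      nlinarith [sq_nonneg (T m - ∑ i ∈ Finset.Ioc m k, y i), h5, hTm]
  refine ⟨⌈4 * C / ε⌉₊ + 1, fun n hn => ?_⟩
  have hn1 : 1 ≤ n := le_trans (by omega) hn
  have hnR : (0:ℝ) < (n : ℝ) := by exact_mod_cast hn1
  have hnbig : 4 * C / ε < (n : ℝ) := by
    calc 4 * C / ε ≤ (⌈4 * C / ε⌉₊ : ℝ) := Nat.le_ceil _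
      _ < (n : ℝ) := by exact_mod_cast (by omega : ⌈4 * C / ε⌉₊ < n)
  have hsup_nn : 0 ≤ ⨆ k : Finset.Icc 1 n, T (k : ℕ) ^ 2 :=
    Real.iSup_nonneg fun k => sq_nonneg _
  have hsup_le : (⨆ k : Finset.Icc 1 n, T (k : ℕ) ^ 2) ≤ 2 * C + (n : ℝ) * (ε / 2) := by
    have hne : Nonempty (Finset.Icc 1 n) := ⟨⟨1, Finset.mem_Icc.mpr ⟨le_rfl, hn1⟩⟩⟩
    exact ciSup_le fun k => hkey n k (Finset.mem_Icc.mp k.2).2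
  rw [Real.dist_eq, sub_zero, abs_of_nonneg (by positivity)]
  have h7 : (1 / (n : ℝ)) * (⨆ k : Finset.Icc 1 n, T (k : ℕ) ^ 2) ≤
      (1 / (n : ℝ)) * (2 * C + (n : ℝ) * (ε / 2)) :=
    mul_le_mul_of_nonneg_left hsup_le (by positivity)
  have h8 : (1 / (n : ℝ)) * (2 * C + (n : ℝ) * (ε / 2)) = 2 * C / n + ε / 2 := by
    field_simp
  have h9 : 2 * C / n < ε / 2 := by
    rw [div_lt_iff₀ hnR]
    rw [div_lt_iff₀ hε] at hnbig
    nlinarith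
  calc (1 / (n : ℝ)) * (⨆ k : Finset.Icc 1 n, T (k : ℕ) ^ 2)
      ≤ 2 * C / n + ε / 2 := h8 ▸ h7
    _ < ε := by linarith

/-- If `∑_k ‖E(X_k|F₀)‖₂² < ∞`, then `n⁻¹ max_{1≤k≤n} (E(S_k|F₀))² → 0` almost surely,
where `S_k = X_1 + ⋯ + X_k`. -/
theorem stmt8 {Ω : Type*} [m0 : MeasurableSpace Ω] (μ : Measure Ω) [IsProbabilityMeasure μ]
    (F0 : MeasurableSpace Ω) (hF0 : F0 ≤ m0) (X : ℕ → Ω → ℝ)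
    (hX : ∀ i, MemLp (X i) 2 μ)
    (hsum : Summable (fun k : ℕ => ((eLpNorm (condExp F0 μ (X (k + 1))) 2 μ).toReal) ^ 2)) :
    ∀ᵐ ω ∂μ, Tendsto (fun n : ℕ => (1 / (n : ℝ)) *
      ⨆ k : Finset.Icc 1 n,
        (condExp F0 μ (fun ω' => ∑ i ∈ Finset.Icc 1 (k : ℕ), X i ω') ω) ^ 2)
      atTop (nhds 0) := by
  letI : MeasurableSpace Ω := m0
  set Y : ℕ → Ω → ℝ := fun i => μ[X i|F0] with hYdef
  have hYmem : ∀ i, MemLp (Y i) 2 μ := fun i => memLp2_condexp μ F0 hF0 (hX i)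
  have hYmeas : ∀ i, Measurable (Y i) := fun i =>
    (stronglyMeasurable_condExp.mono hF0).measurable
  -- a.e. summability of squares
  have hsum2 : Summable fun k => ∫ ω, Y (k + 1) ω ^ 2 ∂μ := by
    refine hsum.congr fun k => ?_
    exact sq_eLpNorm_two (hYmem (k + 1))
  have hsummable : ∀ᵐ ω ∂μ, Summable fun k => Y (k + 1) ω ^ 2 := by
    have hmeask : ∀ k : ℕ, Measurable fun ω => ENNReal.ofReal (Y (k + 1) ω ^ 2) :=
      fun k => ((hYmeas (k + 1)).pow_const 2).ennreal_ofReal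
    have hlt : ∫⁻ ω, ∑' k, ENNReal.ofReal (Y (k + 1) ω ^ 2) ∂μ < ⊤ := by
      rw [lintegral_tsum fun k => (hmeask k).aemeasurable]
      have hkey : ∀ k : ℕ, ∫⁻ ω, ENNReal.ofReal (Y (k + 1) ω ^ 2) ∂μ =
          ENNReal.ofReal (∫ ω, Y (k + 1) ω ^ 2 ∂μ) := fun k =>
        (ofReal_integral_eq_lintegral_ofReal ((hYmem (k + 1)).integrable_sq)
          (Eventually.of_forall fun ω => sq_nonneg _)).symm
      simp_rw [hkey]
      rw [← ENNReal.ofReal_tsum_of_nonneg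
        (fun k => integral_nonneg fun ω => sq_nonneg _) hsum2]
      exact ENNReal.ofReal_lt_top
    have hae := ae_lt_top (Measurable.ennreal_tsum hmeask) hlt.ne
    refine hae.mono fun ω hω => ?_
    have hs := ENNReal.summable_toReal hω.ne
    refine hs.congr fun k => ?_
    exact ENNReal.toReal_ofReal (sq_nonneg _)
  -- a.e. identification of condexp of partial sums
  have hsums : ∀ᵐ ω ∂μ, ∀ k : ℕ,
      condExp F0 μ (fun ω' => ∑ i ∈ Finset.Icc 1 k, X i ω') ω =
        ∑ i ∈ Finset.Icc 1 k, Y i ω := by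
    rw [ae_all_iff]
    intro k
    have heq : (fun ω' => ∑ i ∈ Finset.Icc 1 k, X i ω') = ∑ i ∈ Finset.Icc 1 k, X i := by
      ext ω'; simp [Finset.sum_apply]
    rw [heq]
    have h := condExp_finsetSum (μ := μ) (m := F0)
      (fun i (_ : i ∈ Finset.Icc 1 k) => (hX i).integrable one_le_two)
    refine h.mono fun ω hω => ?_
    rw [hω]
    simp [Finset.sum_apply]
    rfl
  filter_upwards [hsummable, hsums] with ω hω1 hω2
  have hdet := det_tendsto (fun i => Y i ω) hω1
  refine hdet.congr fun n => ?_
  congr 1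
  exact iSup_congr fun k => by rw [hω2 (k : ℕ)]
end
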